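/- Let w be a word over alphabet Σ of the form w = w' a^k w'' where the letter a does not occur in w' and w'' does not start with a. If w ∼_n v for some n ≥ 2, then v = v' a^k v'' where v' has the same content as w' and v'' does not start with a. -/

import Mathlib

/-- Tropical (max-plus) matrix multiplication over `ℝ ∪ {-∞}`. -/
noncomputable def tmul {n : ℕ} (A B : Matrix (Fin n) (Fin n) EReal) :
    Matrix (Fin n) (Fin n) EReal :=
  fun i j => ⨆ k, A i k + B k j

/-- The tropical identity matrix: `0` on the diagonal, `-∞` elsewhere. -/
noncomputable def tOne {n : ℕ} : Matrix (Fin n) (Fin n) EReal :=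
  fun i j => if i = j then 0 else ⊥

/-- Tropical product of a list of matrices. -/
noncomputable def tProd {n : ℕ} (l : List (Matrix (Fin n) (Fin n) EReal)) :
    Matrix (Fin n) (Fin n) EReal :=
  l.foldr tmul tOne

/-- A matrix is upper triangular if all entries below the diagonal are `-∞`. -/
def IsUT {n : ℕ} (A : Matrix (Fin n) (Fin n) EReal) : Prop :=
  ∀ i j : Fin n, j < i → A i j = ⊥

/-- `w = v` is a semigroup identity for `UT_n`: every assignment of upper
triangular tropical matrices to the letters gives equal products. -/
noncomputable def UTId (n : ℕ) {σ : Type*} (w v : List σ) : Prop :=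
  ∀ φ : σ → Matrix (Fin n) (Fin n) EReal, (∀ s, IsUT (φ s)) →
    tProd (w.map φ) = tProd (v.map φ)


namespace UTFB

open List

variable {σ : Type*}

noncomputable def sE (A : σ → EReal) : List σ → EReal
  | [] => 0
  | s :: u => A s + sE A u

noncomputable def eE (A B C : σ → EReal) : List σ → EReal
  | [] => ⊥
  | s :: u => (A s + eE A B C u) ⊔ (B s + sE C u)

lemma sE_append (A : σ → EReal) (x y : List σ) : sE A (x ++ y) = sE A x + sE A y := by
  induction x with
  | nil => simp [sE]
  | cons s x ih => simp [sE, ih, add_assoc]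

lemma add_sup' (a b c : EReal) : a + (b ⊔ c) = (a + b) ⊔ (a + c) := by
  rcases le_total b c with h | h
  · rw [sup_eq_right.2 h, sup_eq_right.2 (add_le_add (le_refl a) h)]
  · rw [sup_eq_left.2 h, sup_eq_left.2 (add_le_add (le_refl a) h)]

lemma sup_add' (a b c : EReal) : (a ⊔ b) + c = (a + c) ⊔ (b + c) := by
  rw [add_comm, add_sup', add_comm c a, add_comm c b]

lemma eE_append (A B C : σ → EReal) (x y : List σ) :
    eE A B C (x ++ y) = (sE A x + eE A B C y) ⊔ (eE A B C x + sE C y) := by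
  induction x with
  | nil => simp [eE, sE]
  | cons s x ih =>
    show eE A B C (s :: (x ++ y)) = _
    simp only [eE, sE]
    rw [ih, sE_append, add_sup', sup_add']
    simp [add_assoc, sup_assoc]

lemma sE_zero (u : List σ) : sE (fun _ => (0:EReal)) u = 0 := by
  induction u with
  | nil => rfl
  | cons s u ih => simp [sE, ih]

lemma eE_bot (A B : σ → EReal) (C : σ → EReal) (u : List σ) (h : ∀ s ∈ u, B s = ⊥) :
    eE A B C u = ⊥ := by
  induction u with
  | nil => rfl
  | cons s u ih =>
    simp [eE, ih (fun t ht => h t (mem_cons_of_mem _ ht)), h s mem_cons_self]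

lemma sE_const (A : σ → EReal) (c : ℝ) (l : List σ) (h : ∀ s ∈ l, A s = (c : EReal)) :
    sE A l = ((l.length * c : ℝ) : EReal) := by
  induction l with
  | nil => simp [sE]
  | cons s l ih =>
    rw [sE, h s mem_cons_self, ih (fun t ht => h t (mem_cons_of_mem _ ht)),
      ← EReal.coe_add]
    congr 1
    push_cast [List.length_cons]
    ring

lemma sE_count [DecidableEq σ] (a s : σ) (l : List σ) (ha : a ∉ l) :
    sE (fun t => if t = a then ⊥ else if t = s then (1:EReal) else 0) l
      = ((l.count s : ℝ) : EReal) := by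
  induction l with
  | nil => simp [sE]
  | cons b l ih =>
    have hb : b ≠ a := by rintro rfl; exact ha mem_cons_self
    have ha' : a ∉ l := fun h => ha (mem_cons_of_mem _ h)
    rw [sE, ih ha']
    by_cases hbs : b = s
    · subst hbs
      rw [if_neg hb, if_pos rfl, count_cons_self, ← EReal.coe_one, ← EReal.coe_add]
      congr 1
      push_cast
      ring
    · rw [if_neg hb, if_neg hbs, count_cons_of_ne hbs]
      simp

section Mat

variable {n : ℕ}

def i0 (hn : 2 ≤ n) : Fin n := ⟨0, by omega⟩
def i1 (hn : 2 ≤ n) : Fin n := ⟨1, by omega⟩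

noncomputable def emb (hn : 2 ≤ n) (α β γ : EReal) : Matrix (Fin n) (Fin n) EReal :=
  fun i j =>
    if (i : ℕ) = 0 ∧ (j : ℕ) = 0 then α
    else if (i : ℕ) = 0 ∧ (j : ℕ) = 1 then β
    else if (i : ℕ) = 1 ∧ (j : ℕ) = 1 then γ
    else ⊥

lemma emb_isUT (hn : 2 ≤ n) (α β γ : EReal) : IsUT (emb hn α β γ) := by
  intro i j hij
  have hij' : (j : ℕ) < (i : ℕ) := hij
  simp only [emb]
  split_ifs with h1 h2 h3 <;> first | rfl | (exfalso; omega)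

lemma emb_00 (hn : 2 ≤ n) (α β γ : EReal) : emb hn α β γ (i0 hn) (i0 hn) = α := by
  simp [emb, i0]

lemma emb_01 (hn : 2 ≤ n) (α β γ : EReal) : emb hn α β γ (i0 hn) (i1 hn) = β := by
  simp [emb, i0, i1]

lemma emb_11 (hn : 2 ≤ n) (α β γ : EReal) : emb hn α β γ (i1 hn) (i1 hn) = γ := by
  simp [emb, i0, i1]

lemma emb_10 (hn : 2 ≤ n) (α β γ : EReal) : emb hn α β γ (i1 hn) (i0 hn) = ⊥ := by
  simp [emb, i0, i1]

lemma emb_row_bot (hn : 2 ≤ n) (α β γ : EReal) (i k : Fin n)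
    (h0 : (k : ℕ) ≠ 0) (h1 : (k : ℕ) ≠ 1) : emb hn α β γ i k = ⊥ := by
  simp [emb, h0, h1]

lemma isup_collapse (hn : 2 ≤ n) (f : Fin n → EReal)
    (h : ∀ k : Fin n, (k : ℕ) ≠ 0 → (k : ℕ) ≠ 1 → f k = ⊥) :
    ⨆ k, f k = f (i0 hn) ⊔ f (i1 hn) := by
  apply _root_.le_antisymm
  · refine iSup_le fun k => ?_
    by_cases h0 : (k : ℕ) = 0
    · have hk : k = i0 hn := Fin.ext h0
      rw [hk]; exact le_sup_left
    by_cases h1 : (k : ℕ) = 1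
    · have hk : k = i1 hn := Fin.ext h1
      rw [hk]; exact le_sup_right
    · rw [h k h0 h1]; exact bot_le
  · exact sup_le (le_iSup f _) (le_iSup f _)

lemma tProd_emb (hn : 2 ≤ n) (A B C : σ → EReal) (u : List σ) :
    tProd (u.map fun s => emb hn (A s) (B s) (C s)) (i0 hn) (i0 hn) = sE A u ∧
    tProd (u.map fun s => emb hn (A s) (B s) (C s)) (i0 hn) (i1 hn) = eE A B C u ∧
    tProd (u.map fun s => emb hn (A s) (B s) (C s)) (i1 hn) (i1 hn) = sE C u ∧
    tProd (u.map fun s => emb hn (A s) (B s) (C s)) (i1 hn) (i0 hn) = ⊥ := by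
  have hne0 : ((i0 hn : Fin n) : ℕ) = 0 := rfl
  have hne1 : ((i1 hn : Fin n) : ℕ) = 1 := rfl
  induction u with
  | nil =>
    have h01 : (i0 hn) ≠ (i1 hn) := by
      intro h; have := congrArg (fun x : Fin n => (x : ℕ)) h; simp [i0, i1] at this
    refine ⟨?_, ?_, ?_, ?_⟩ <;>
      simp [tProd, tOne, sE, eE, h01, h01.symm]
  | cons s u ih =>
    obtain ⟨h00, h01, h11, h10⟩ := ih
    set P := tProd (u.map fun s => emb hn (A s) (B s) (C s)) with hP
    have key : ∀ i j : Fin n,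
        tProd ((s :: u).map fun s => emb hn (A s) (B s) (C s)) i j =
          (emb hn (A s) (B s) (C s) i (i0 hn) + P (i0 hn) j) ⊔
          (emb hn (A s) (B s) (C s) i (i1 hn) + P (i1 hn) j) := by
      intro i j
      show (⨆ k, emb hn (A s) (B s) (C s) i k + P k j) = _
      exact isup_collapse hn _ fun k h0 h1 => by
        rw [emb_row_bot hn _ _ _ _ _ h0 h1, EReal.bot_add]
    refine ⟨?_, ?_, ?_, ?_⟩
    · rw [key, emb_00, emb_01, h00, h10, EReal.add_bot, sup_bot_eq]; rfl
    · rw [key, emb_00, emb_01, h01, h11]; rfl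
    · rw [key, emb_10, emb_11, h11, EReal.bot_add, bot_sup_eq]; rfl
    · rw [key, emb_10, emb_11, h10, EReal.bot_add, EReal.add_bot, bot_sup_eq]

lemma utid_eE (hn : 2 ≤ n) {w v : List σ} (h : UTId n w v) (A B C : σ → EReal) :
    eE A B C w = eE A B C v := by
  have hφ := h (fun s => emb hn (A s) (B s) (C s)) (fun s => emb_isUT hn _ _ _)
  have hw := (tProd_emb hn A B C w).2.1
  have hv := (tProd_emb hn A B C v).2.1
  rw [← hw, ← hv, hφ]

end Mat

section Tests

variable [DecidableEq σ] (a : σ)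

/-- Test B closed form. -/
lemma eE_testB (A B : σ → EReal) (hAa : A a = ⊥) (hBa : B a = 0)
    (hB : ∀ s, s ≠ a → B s = ⊥) (u' t : List σ) (hu' : a ∉ u') :
    eE A B (fun _ => 0) (u' ++ a :: t) = sE A u' := by
  rw [eE_append]
  have h1 : eE A B (fun _ => 0) (a :: t) = 0 := by
    simp [eE, hAa, hBa, sE_zero]
  have h2 : eE A B (fun _ => 0) u' = ⊥ :=
    eE_bot _ _ _ _ (fun s hs => hB s (by rintro rfl; exact hu' hs))
  rw [h1, h2, sE_zero]
  simp

/-- Value of the first-run-length test on a replicate block. -/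
lemma eE_rep (A B : σ → EReal) (hAa : A a = 1) (hBa : B a = 0) (j : ℕ) (hj : 1 ≤ j) :
    eE A B (fun _ => 0) (List.replicate j a) = (((j : ℝ) - 1 : ℝ) : EReal) := by
  induction j with
  | zero => omega
  | succ j ih =>
    rcases Nat.eq_zero_or_pos j with rfl | hj'
    · simp [eE, sE, hAa, hBa]
    · rw [List.replicate_succ, eE, ih hj', hAa, hBa, sE_zero, add_zero]
      have h1 : (1 : EReal) + (((j : ℝ) - 1 : ℝ) : EReal) = (((j+1 : ℕ) : ℝ) - 1 : ℝ) := by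
        rw [← EReal.coe_one, ← EReal.coe_add]
        congr 1
        push_cast
        ring
      rw [h1]
      rw [sup_eq_left.2 ?_]
      rw [← EReal.coe_zero]
      apply EReal.coe_le_coe_iff.2
      push_cast
      linarith

/-- Generic length bound for `eE`. -/
lemma eE_le_length (A B : σ → EReal) (hA : ∀ s, A s ≤ 1) (hB : ∀ s, B s ≤ 0)
    (u : List σ) : eE A B (fun _ => 0) u ≤ ((u.length : ℝ) : EReal) := by
  induction u with
  | nil => exact bot_le
  | cons s u ih =>
    rw [eE, sE_zero, add_zero]
    apply sup_le
    · calc A s + eE A B (fun _ => 0) u ≤ 1 + ((u.length : ℝ) : EReal) :=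
            add_le_add (hA s) ih
        _ = (((s :: u).length : ℝ) : EReal) := by
            rw [← EReal.coe_one, ← EReal.coe_add]
            congr 1
            push_cast [List.length_cons]
            ring
    · calc B s ≤ 0 := hB s
        _ ≤ (((s :: u).length : ℝ) : EReal) := by
            rw [← EReal.coe_zero]
            apply EReal.coe_le_coe_iff.2
            positivity

/-- Test C closed form. -/
lemma eE_testC (M : ℝ) (u' u'' : List σ) (j : ℕ) (hj : 1 ≤ j)
    (hu' : a ∉ u') (hu'' : u''.head? ≠ some a) (hM : (u''.length : ℝ) + 1 < M) :
    eE (fun s => if s = a then 1 else ((-M : ℝ) : EReal))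
       (fun s => if s = a then 0 else ⊥) (fun _ => 0)
       (u' ++ (List.replicate j a ++ u'')) =
      (((j : ℝ) - 1 - M * u'.length : ℝ) : EReal) := by
  set A : σ → EReal := fun s => if s = a then 1 else ((-M : ℝ) : EReal) with hA
  set B : σ → EReal := fun s => if s = a then 0 else ⊥ with hB
  have hM1 : (1 : ℝ) < M := by
    have : (0:ℝ) ≤ u''.length := by positivity
    linarith
  have hAa : A a = 1 := by simp [hA]
  have hBa : B a = 0 := by simp [hB]
  -- the inner block value
  have hrep : eE A B (fun _ => 0) (List.replicate j a ++ u'') =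
      (((j : ℝ) - 1 : ℝ) : EReal) := by
    rw [eE_append, eE_rep a A B hAa hBa j hj, sE_zero, add_zero]
    have hsrep : sE A (List.replicate j a) = ((j : ℝ) : EReal) := by
      rw [sE_const A 1 _ (fun s hs => by
        rw [List.eq_of_mem_replicate hs, hAa, EReal.coe_one])]
      norm_num
    rw [hsrep]
    apply sup_eq_right.2
    -- show  j + eE u'' ≤ j - 1
    rcases u'' with _ | ⟨h, t⟩
    · simp [eE]
    · have hha : h ≠ a := by
        intro hEq
        exact hu'' (by rw [hEq]; rfl)
      have hbound : eE A B (fun _ => 0) t ≤ ((t.length : ℝ) : EReal) := by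
        apply eE_le_length
        · intro s
          by_cases hs : s = a
          · simp [hA, hs]
          · simp only [hA, if_neg hs]
            rw [← EReal.coe_one]
            exact EReal.coe_le_coe_iff.2 (by linarith)
        · intro s
          by_cases hs : s = a
          · simp [hB, hs]
          · simp [hB, hs]
      have hval : eE A B (fun _ => 0) (h :: t) =
          ((-M : ℝ) : EReal) + eE A B (fun _ => 0) t := by
        rw [eE, sE_zero, add_zero]
        have : B h = ⊥ := by simp [hB, hha]
        rw [this]
        have : A h = ((-M : ℝ) : EReal) := by simp [hA, hha]
        rw [this]
        simp
      rw [hval]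
      calc ((j : ℝ) : EReal) + (((-M : ℝ) : EReal) + eE A B (fun _ => 0) t)
          ≤ ((j : ℝ) : EReal) + (((-M : ℝ) : EReal) + ((t.length : ℝ) : EReal)) := by
            apply add_le_add le_rfl
            exact add_le_add le_rfl hbound
        _ = (((j : ℝ) + (-M + t.length) : ℝ) : EReal) := by
            rw [EReal.coe_add, EReal.coe_add]
        _ ≤ (((j : ℝ) - 1 : ℝ) : EReal) := by
            apply EReal.coe_le_coe_iff.2
            have : ((h :: t).length : ℝ) = t.length + 1 := by
              push_cast [List.length_cons]; ring
            rw [this] at hM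
            linarith
  rw [eE_append, hrep]
  have h2 : eE A B (fun _ => 0) u' = ⊥ :=
    eE_bot _ _ _ _ (fun s hs => by
      have : s ≠ a := by rintro rfl; exact hu' hs
      simp [hB, this])
  have h3 : sE A u' = ((u'.length * (-M) : ℝ) : EReal) := by
    apply sE_const
    intro s hs
    have : s ≠ a := by rintro rfl; exact hu' hs
    simp [hA, this]
  rw [h2, h3, sE_zero, add_zero, sup_bot_eq, ← EReal.coe_add]
  congr 1
  ring

lemma length_eq_sum_count [Fintype σ] [DecidableEq σ] (l : List σ) :
    l.length = ∑ s, l.count s := by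
  induction l with
  | nil => simp
  | cons b l ih =>
    rw [List.length_cons, ih]
    have : ∀ s : σ, (b :: l).count s = l.count s + if s = b then 1 else 0 := by
      intro s; rw [List.count_cons]
      by_cases hsb : s = b
      · subst hsb; simp
      · have hbs : ¬ b = s := fun h => hsb h.symm
        simp [hsb, hbs]
    simp only [this]
    rw [Finset.sum_add_distrib, Finset.sum_ite_eq' Finset.univ b (fun _ => 1)]
    simp

lemma dropWhile_head_false (p : σ → Bool) (l : List σ) (b : σ) (t : List σ)
    (h : l.dropWhile p = b :: t) : p b = false := by
  induction l with
  | nil => simp [List.dropWhile] at h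
  | cons c l ih =>
    rw [List.dropWhile_cons] at h
    by_cases hc : p c = true
    · rw [if_pos hc] at h; exact ih h
    · rw [if_neg hc] at h
      injection h with h1 h2
      subst h1
      simpa using hc

end Tests

end UTFB

/-- If `w = w' a^k w''` with no `a` in `w'` and `w''` not starting with `a`, and
`w ∼_n v`, then `v = v' a^k v''` with `c(v') = c(w')` and `v''` not starting with `a`. -/


theorem utId_first_block {σ : Type*} [Fintype σ] [DecidableEq σ] (n : ℕ) (hn : 2 ≤ n)
    (a : σ) (k : ℕ) (hk : 0 < k) (w' w'' : List σ)
    (hw' : a ∉ w') (hw'' : w''.head? ≠ some a)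
    (v : List σ) (hv : v ≠ [])
    (h : UTId n (w' ++ List.replicate k a ++ w'') v) :
    ∃ v' v'' : List σ, v = v' ++ List.replicate k a ++ v'' ∧
      (∀ s : σ, v'.count s = w'.count s) ∧ v''.head? ≠ some a := by
  classical
  open UTFB in
  obtain ⟨k', rfl⟩ : ∃ k', k = k' + 1 := ⟨k - 1, by omega⟩
  -- the w-side cons-shaped decomposition
  have hwdec : w' ++ List.replicate (k' + 1) a ++ w''
      = w' ++ (a :: (List.replicate k' a ++ w'')) := by
    rw [List.append_assoc, List.replicate_succ, List.cons_append]
  -- a occurs in v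
  have hav : a ∈ v := by
    by_contra hav
    have heq := UTFB.utid_eE hn h (fun t => if t = a then ⊥ else 0)
      (fun t => if t = a then 0 else ⊥) (fun _ => 0)
    have hL : eE (fun t => if t = a then ⊥ else 0) (fun t => if t = a then 0 else ⊥)
        (fun _ => 0) (w' ++ List.replicate (k' + 1) a ++ w'')
        = sE (fun t => if t = a then ⊥ else 0) w' := by
      rw [hwdec]
      exact UTFB.eE_testB a _ _ (by simp) (by simp) (fun s hs => by simp [hs]) w' _ hw'
    have hR : eE (fun t => if t = a then ⊥ else 0) (fun t => if t = a then 0 else ⊥)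
        (fun _ => 0) v = ⊥ :=
      UTFB.eE_bot _ _ _ _ (fun s hs => by
        have hsa : s ≠ a := fun hEq => hav (hEq ▸ hs)
        simp [hsa])
    have hS : sE (fun t : σ => if t = a then ⊥ else 0) w'
        = ((w'.length * 0 : ℝ) : EReal) := by
      apply UTFB.sE_const
      intro s hs
      have hsa : s ≠ a := by rintro rfl; exact hw' hs
      simp [hsa]
    rw [hL, hR, hS] at heq
    exact EReal.coe_ne_bot _ heq
  -- decompose v
  set v1 := v.takeWhile (fun x => x ≠ a) with hv1
  set r := v.dropWhile (fun x => x ≠ a) with hr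
  have hvsplit : v1 ++ r = v :=
    List.takeWhile_append_dropWhile (p := fun x => decide (x ≠ a)) (l := v)
  have hrne : r ≠ [] := by
    intro hnil
    have hall := List.dropWhile_eq_nil_iff.mp hnil a hav
    simp at hall
  have hv1a : a ∉ v1 := fun hmem => by simpa using List.mem_takeWhile_imp hmem
  set v2 := r.dropWhile (fun x => x = a) with hv2
  set m := (r.takeWhile (fun x => x = a)).length with hm
  have htwrep : r.takeWhile (fun x => decide (x = a)) = List.replicate m a := by
    have hmem : ∀ b ∈ r.takeWhile (fun x => decide (x = a)), b = a := fun b hb => by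
      simpa using List.mem_takeWhile_imp hb
    exact List.eq_replicate_of_mem hmem
  have hrsplit : List.replicate m a ++ v2 = r := by
    rw [← htwrep, hv2]
    exact List.takeWhile_append_dropWhile (p := fun x => decide (x = a)) (l := r)
  obtain ⟨t, ht⟩ : ∃ t, r = a :: t := by
    cases hrc : r with
    | nil => exact absurd hrc hrne
    | cons b t =>
      have hb : decide (b ≠ a) = false :=
        UTFB.dropWhile_head_false (fun x => decide (x ≠ a)) v b t (hr ▸ hrc)
      have hba : b = a := by simpa using hb
      exact ⟨t, by rw [hba]⟩
  have hm1 : 1 ≤ m := by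
    rw [hm, ht]
    simp [List.takeWhile_cons]
  obtain ⟨m', hmm'⟩ : ∃ m', m = m' + 1 := ⟨m - 1, by omega⟩
  have hv2head : v2.head? ≠ some a := by
    cases hv2c : v2 with
    | nil => simp
    | cons b t2 =>
      have hb : decide (b = a) = false :=
        UTFB.dropWhile_head_false (fun x => decide (x = a)) r b t2 (hv2 ▸ hv2c)
      have hba : b ≠ a := by simpa using hb
      simp [hba]
  have hvdec : v = v1 ++ List.replicate m a ++ v2 := by
    rw [List.append_assoc, hrsplit, hvsplit]
  have hvdec' : v = v1 ++ (a :: (List.replicate m' a ++ v2)) := by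
    rw [hvdec, hmm', List.append_assoc, List.replicate_succ, List.cons_append]
  -- counts agree
  have hcount : ∀ s : σ, v1.count s = w'.count s := by
    intro s
    have heq := UTFB.utid_eE hn h (fun t => if t = a then ⊥ else if t = s then 1 else 0)
      (fun t => if t = a then 0 else ⊥) (fun _ => 0)
    have hL : eE (fun t => if t = a then ⊥ else if t = s then 1 else 0)
        (fun t => if t = a then 0 else ⊥) (fun _ => 0)
        (w' ++ List.replicate (k' + 1) a ++ w'') = ((w'.count s : ℝ) : EReal) := by
      rw [hwdec, UTFB.eE_testB a _ _ (by simp) (by simp) (fun t ht' => by simp [ht']) w' _ hw',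
        UTFB.sE_count a s w' hw']
    have hR : eE (fun t => if t = a then ⊥ else if t = s then 1 else 0)
        (fun t => if t = a then 0 else ⊥) (fun _ => 0) v = ((v1.count s : ℝ) : EReal) := by
      rw [hvdec', UTFB.eE_testB a _ _ (by simp) (by simp) (fun t ht' => by simp [ht']) v1 _ hv1a,
        UTFB.sE_count a s v1 hv1a]
    rw [hL, hR] at heq
    have := EReal.coe_eq_coe_iff.mp heq
    exact_mod_cast this.symm
  -- lengths agree
  have hlen : (v1.length : ℝ) = (w'.length : ℝ) := by
    have h1 := UTFB.length_eq_sum_count v1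
    have h2 := UTFB.length_eq_sum_count w'
    have : v1.length = w'.length := by
      rw [h1, h2]
      exact Finset.sum_congr rfl (fun s _ => hcount s)
    exact_mod_cast this
  -- run lengths agree
  set M : ℝ := (w''.length + v2.length : ℝ) + 2 with hM
  have hMw : (w''.length : ℝ) + 1 < M := by
    have : (0:ℝ) ≤ v2.length := by positivity
    rw [hM]; push_cast; linarith
  have hMv : (v2.length : ℝ) + 1 < M := by
    have : (0:ℝ) ≤ w''.length := by positivity
    rw [hM]; push_cast; linarith
  have heqC := UTFB.utid_eE hn h (fun s => if s = a then 1 else ((-M : ℝ) : EReal))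
    (fun s => if s = a then 0 else ⊥) (fun _ => 0)
  have hLC : eE (fun s => if s = a then 1 else ((-M : ℝ) : EReal))
      (fun s => if s = a then 0 else ⊥) (fun _ => 0)
      (w' ++ List.replicate (k' + 1) a ++ w'')
      = ((((k' + 1 : ℕ) : ℝ) - 1 - M * w'.length : ℝ) : EReal) := by
    rw [List.append_assoc]
    exact UTFB.eE_testC a M w' w'' (k' + 1) (by omega) hw' hw'' hMw
  have hRC : eE (fun s => if s = a then 1 else ((-M : ℝ) : EReal))
      (fun s => if s = a then 0 else ⊥) (fun _ => 0) v
      = ((((m : ℕ) : ℝ) - 1 - M * v1.length : ℝ) : EReal) := by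
    rw [hvdec, List.append_assoc]
    exact UTFB.eE_testC a M v1 v2 m hm1 hv1a hv2head hMv
  rw [hLC, hRC] at heqC
  have hreal := EReal.coe_eq_coe_iff.mp heqC
  have hkm : (k' + 1 : ℕ) = m := by
    have : ((k' + 1 : ℕ) : ℝ) = ((m : ℕ) : ℝ) := by
      rw [hlen] at hreal
      linarith
    exact_mod_cast this
  exact ⟨v1, v2, by rw [hvdec, hkm], hcount, hv2head⟩
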